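/- (Uniform one-dimensional subspace RIP.) Let X be a subspace of R^N with orthonormal basis U, and X1, X2 subspaces of X. Suppose Φ ∈ R^{n×N} satisfies 1 − δ < s_min(ΦU)^2 ≤ s_max(ΦU)^2 < 1 + δ with δ ∈ (0,1/4). Then there is a universal constant C > 0 such that for every nonzero u ∈ X1, letting Y2 = ΦX2, one has |aff(Y2, span(Φu))^2 − aff(X2, span(u))^2| ≤ C·(1 − aff(X2, span(u))^2)·δ. -/

import Mathlib

noncomputable section
open scoped RealInnerProductSpace Matrix

/-- The `j`-th column of a matrix, as a vector in Euclidean space. -/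
def col {m k : ℕ} (A : Matrix (Fin m) (Fin k) ℝ) (j : Fin k) : EuclideanSpace ℝ (Fin m) :=
  WithLp.toLp 2 (fun i => A i j)

/-- Orthogonal projection onto a subspace, as an endomorphism. -/
def projE {m : ℕ} (K : Submodule ℝ (EuclideanSpace ℝ (Fin m))) :
    EuclideanSpace ℝ (Fin m) →ₗ[ℝ] EuclideanSpace ℝ (Fin m) :=
  K.subtype ∘ₗ K.orthogonalProjectionOnto.toLinearMap

/-- Frobenius norm of a real matrix. -/
def frob {m k : ℕ} (A : Matrix (Fin m) (Fin k) ℝ) : ℝ :=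
  Real.sqrt (∑ i, ∑ j, (A i j) ^ 2)

/-- Operator (spectral) norm of a real matrix, w.r.t. Euclidean norms. -/
def opn {m k : ℕ} (A : Matrix (Fin m) (Fin k) ℝ) : ℝ :=
  ‖LinearMap.toContinuousLinearMap (Matrix.toEuclideanLin A)‖

namespace RIPaux

lemma projE_mem {m : ℕ} (K : Submodule ℝ (EuclideanSpace ℝ (Fin m)))
    (x : EuclideanSpace ℝ (Fin m)) : projE K x ∈ K := (K.orthogonalProjectionOnto x).2

lemma projE_eq_self {m : ℕ} (K : Submodule ℝ (EuclideanSpace ℝ (Fin m)))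
    {x : EuclideanSpace ℝ (Fin m)} (hx : x ∈ K) : projE K x = x :=
  K.starProjection_eq_self_iff.mpr hx

lemma sub_projE_mem {m : ℕ} (K : Submodule ℝ (EuclideanSpace ℝ (Fin m)))
    (x : EuclideanSpace ℝ (Fin m)) : x - projE K x ∈ Kᗮ :=
  K.sub_starProjection_mem_orthogonal x

lemma projE_pyth {m : ℕ} (K : Submodule ℝ (EuclideanSpace ℝ (Fin m)))
    (x : EuclideanSpace ℝ (Fin m)) :
    ‖x‖ ^ 2 = ‖projE K x‖ ^ 2 + ‖x - projE K x‖ ^ 2 := by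
  have hmem := sub_projE_mem K x
  have hp := projE_mem K x
  have hinner : ⟪projE K x, x - projE K x⟫ = 0 :=
    (Submodule.mem_orthogonal K _).1 hmem _ hp
  have hx : x = projE K x + (x - projE K x) := by abel
  calc ‖x‖ ^ 2 = ‖projE K x + (x - projE K x)‖ ^ 2 := by rw [← hx]
    _ = ‖projE K x‖ ^ 2 + 2 * ⟪projE K x, x - projE K x⟫ + ‖x - projE K x‖ ^ 2 :=
      norm_add_sq_real _ _
    _ = ‖projE K x‖ ^ 2 + ‖x - projE K x‖ ^ 2 := by rw [hinner]; ring

lemma toEuclideanLin_mul {n N d : ℕ} (A : Matrix (Fin n) (Fin N) ℝ)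
    (B : Matrix (Fin N) (Fin d) ℝ) (x : EuclideanSpace ℝ (Fin d)) :
    Matrix.toEuclideanLin (A * B) x = Matrix.toEuclideanLin A (Matrix.toEuclideanLin B x) := by
  simp [Matrix.toEuclideanLin_apply, Matrix.mulVec_mulVec]

lemma toEuclideanLin_eq_sum {m k : ℕ} (A : Matrix (Fin m) (Fin k) ℝ)
    (c : EuclideanSpace ℝ (Fin k)) :
    Matrix.toEuclideanLin A c = ∑ j, c j • col A j := by
  ext i
  have h : (∑ x : Fin k, c x • col A x) i = ∑ x : Fin k, (c x • col A x) i := by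
    rw [WithLp.ofLp_sum]; exact Finset.sum_apply i _ _
  simp [Matrix.toEuclideanLin_apply, Matrix.mulVec, dotProduct, h, col, mul_comm]

lemma toEuclideanLin_single {m k : ℕ} (A : Matrix (Fin m) (Fin k) ℝ) (j : Fin k) :
    Matrix.toEuclideanLin A (EuclideanSpace.single j 1) = col A j := by
  ext i
  simp [Matrix.toEuclideanLin_apply, Matrix.mulVec, dotProduct, col,
    EuclideanSpace.single_apply, mul_ite]

lemma norm_toEuclideanLin_of_orthonormal {m k : ℕ} {U : Matrix (Fin m) (Fin k) ℝ}
    (hU : Orthonormal ℝ (col U)) (c : EuclideanSpace ℝ (Fin k)) :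
    ‖Matrix.toEuclideanLin U c‖ = ‖c‖ := by
  have h1 : ‖Matrix.toEuclideanLin U c‖ ^ 2 = ‖c‖ ^ 2 := by
    rw [toEuclideanLin_eq_sum, ← real_inner_self_eq_norm_sq, hU.inner_sum c c]
    rw [← real_inner_self_eq_norm_sq]
    simp [EuclideanSpace.inner_eq_star_dotProduct, dotProduct]
    rw [EuclideanSpace.norm_sq_eq]
    exact Finset.sum_congr rfl fun i _ => by rw [Real.norm_eq_abs, sq_abs, sq]
  rw [← Real.sqrt_sq (norm_nonneg (Matrix.toEuclideanLin U c)), ← Real.sqrt_sq (norm_nonneg c), h1]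

/-- Arithmetic core. -/
lemma arith (E Uu F Tn Pn Qn δ : ℝ) (hδ0 : 0 < δ) (hδ4 : δ < 1/4)
    (hE : 0 ≤ E)
    (hU : Uu = Pn + E) (hT : Tn = Qn + F)
    (hF1 : (1-δ)*E ≤ F) (hF2 : F ≤ (1+δ)*E)
    (hT1 : (1-δ)*Uu ≤ Tn) (hT2 : Tn ≤ (1+δ)*Uu)
    (hUu : 0 < Uu) (hTn : 0 < Tn) :
    |Qn/Tn - Pn/Uu| ≤ 3 * (1 - Pn/Uu) * δ := by
  have hPn : Pn = Uu - E := by linarith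
  have hQn : Qn = Tn - F := by linarith
  have h1 : Qn/Tn - Pn/Uu = E/Uu - F/Tn := by
    rw [hPn, hQn]; field_simp; ring
  have h2 : 1 - Pn/Uu = E/Uu := by
    rw [hPn]; field_simp; ring
  rw [h1, h2, abs_le]
  constructor
  · rw [neg_le, neg_sub, div_sub_div _ _ hTn.ne' hUu.ne', div_le_iff₀ (by positivity)]
    have heq : 3 * (E / Uu) * δ * (Tn * Uu) = 3 * E * δ * Tn := by
      field_simp
    rw [heq]
    nlinarith [mul_le_mul_of_nonneg_left hT2 hE, mul_le_mul_of_nonneg_left hF1 hUu.le,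
      mul_le_mul_of_nonneg_left hT1 (mul_nonneg hE hδ0.le), mul_nonneg hE hδ0.le]
  · rw [div_sub_div _ _ hUu.ne' hTn.ne', div_le_iff₀ (by positivity)]
    have heq : 3 * (E / Uu) * δ * (Uu * Tn) = 3 * E * δ * Tn := by
      field_simp
    rw [heq]
    nlinarith [mul_le_mul_of_nonneg_left hT2 hE, mul_le_mul_of_nonneg_left hF1 hUu.le,
      mul_le_mul_of_nonneg_left hT1 (mul_nonneg hE hδ0.le), mul_nonneg hE hδ0.le]

end RIPaux

set_option maxHeartbeats 2000000 in
open RIPaux in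
/-- Uniform one-dimensional subspace RIP: there is a universal constant `C > 0` such that
for any near-isometry `Φ` on `X` (with `δ ∈ (0,1/4)`) and any nonzero `u ∈ X1 ⊆ X`,
the affinity of `span(u)` with `X2 ⊆ X` is nearly preserved. -/
theorem uniform_line_subspace_RIP :
    ∃ C : ℝ, 0 < C ∧
      ∀ (N n d : ℕ) (δ : ℝ), δ ∈ Set.Ioo (0 : ℝ) (1/4) →
      ∀ (X X1 X2 : Submodule ℝ (EuclideanSpace ℝ (Fin N))), X1 ≤ X → X2 ≤ X →
      ∀ (U : Matrix (Fin N) (Fin d) ℝ),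
        Orthonormal ℝ (col U) → Submodule.span ℝ (Set.range (col U)) = X →
      ∀ (Φ : Matrix (Fin n) (Fin N) ℝ),
        (∀ x : EuclideanSpace ℝ (Fin d), ‖x‖ = 1 →
          1 - δ < ‖Matrix.toEuclideanLin (Φ * U) x‖ ^ 2 ∧
          ‖Matrix.toEuclideanLin (Φ * U) x‖ ^ 2 < 1 + δ) →
      ∀ u ∈ X1, u ≠ 0 →
        |(‖projE (X2.map (Matrix.toEuclideanLin Φ)) (Matrix.toEuclideanLin Φ u)‖
            / ‖Matrix.toEuclideanLin Φ u‖) ^ 2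
          - (‖projE X2 u‖ / ‖u‖) ^ 2|
          ≤ C * (1 - (‖projE X2 u‖ / ‖u‖) ^ 2) * δ := by
  refine ⟨3, by norm_num, ?_⟩
  intro N n d δ hδ X X1 X2 hX1 hX2 U hU hspan Φ hΦ u huX1 hu0
  obtain ⟨hδ0, hδ4⟩ := hδ
  set T := Matrix.toEuclideanLin Φ with hT
  -- every element of X is in the range of toEuclideanLin U
  have hrange : X ≤ LinearMap.range (Matrix.toEuclideanLin U) := by
    rw [← hspan, Submodule.span_le]
    rintro _ ⟨j, rfl⟩
    exact ⟨EuclideanSpace.single j 1, toEuclideanLin_single U j⟩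
  -- the RIP bounds for arbitrary elements of X
  have key : ∀ x ∈ X, (1-δ) * ‖x‖^2 ≤ ‖T x‖^2 ∧ ‖T x‖^2 ≤ (1+δ) * ‖x‖^2 := by
    intro x hx
    rcases eq_or_ne x 0 with rfl | hx0
    · simp
    · obtain ⟨c, hc⟩ := hrange hx
      have hcn : ‖c‖ = ‖x‖ := by rw [← hc, norm_toEuclideanLin_of_orthonormal hU]
      have hcpos : 0 < ‖c‖ := by rw [hcn]; exact norm_pos_iff.mpr hx0
      have hc0 : c ≠ 0 := by intro h; rw [h] at hcpos; simp at hcpos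
      have hnorm1 : ‖(‖c‖⁻¹ • c : EuclideanSpace ℝ (Fin d))‖ = 1 :=
        norm_smul_inv_norm hc0
      obtain ⟨hl, hh⟩ := hΦ _ hnorm1
      have hΦUc : Matrix.toEuclideanLin (Φ * U) c = T x := by
        rw [toEuclideanLin_mul, hc]
      have hsc : ‖Matrix.toEuclideanLin (Φ * U) (‖c‖⁻¹ • c)‖ ^ 2
          = ‖c‖⁻¹ ^ 2 * ‖T x‖ ^ 2 := by
        rw [map_smul, norm_smul, hΦUc]
        simp [mul_pow, abs_of_nonneg (inv_nonneg.mpr (norm_nonneg c))]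
      rw [hsc] at hl hh
      have hc2 : ‖c‖ ^ 2 > 0 := by positivity
      have hxn : ‖x‖ ≠ 0 := norm_ne_zero_iff.mpr hx0
      constructor
      · calc (1-δ) * ‖x‖^2 = ‖x‖^2 * (1-δ) := by ring
          _ ≤ ‖x‖^2 * (‖x‖⁻¹^2 * ‖T x‖^2) := by
              apply mul_le_mul_of_nonneg_left _ (by positivity)
              rw [← hcn]; exact hl.le
          _ = ‖T x‖^2 := by
              field_simp
      · calc ‖T x‖^2 = ‖x‖^2 * (‖x‖⁻¹^2 * ‖T x‖^2) := by
              field_simp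
          _ ≤ ‖x‖^2 * (1+δ) := by
              apply mul_le_mul_of_nonneg_left _ (by positivity)
              rw [← hcn]; exact hh.le
          _ = (1+δ) * ‖x‖^2 := by ring
  -- names
  set K2 := X2.map T with hK2
  have huX : u ∈ X := hX1 huX1
  set w := projE X2 u with hw
  set e := u - w with he
  have hwX2 : w ∈ X2 := projE_mem X2 u
  have hwX : w ∈ X := hX2 hwX2
  have heX : e ∈ X := Submodule.sub_mem X huX hwX
  have heperp : e ∈ X2ᗮ := sub_projE_mem X2 u
  -- Q projection of T u
  have hTwK2 : T w ∈ K2 := Submodule.mem_map_of_mem hwX2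
  have hTu_sub : T u - projE K2 (T u) = T e - projE K2 (T e) := by
    have hTue : T u = T w + T e := by rw [he, map_sub]; abel
    rw [hTue, map_add, projE_eq_self K2 hTwK2]
    abel
  -- z with T z = projE K2 (T e)
  obtain ⟨z, hzX2, hz⟩ := projE_mem K2 (T e)
  -- norms
  have hupos : (0:ℝ) < ‖u‖ := norm_pos_iff.mpr hu0
  have hu2 : (0:ℝ) < ‖u‖^2 := by positivity
  have hTu_low := (key u huX).1
  have hTu_high := (key u huX).2
  have hTupos : (0:ℝ) < ‖T u‖^2 := lt_of_lt_of_le (by nlinarith) hTu_low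
  -- bounds on F = ‖T e - projE K2 (T e)‖^2
  have hF_high : ‖T e - projE K2 (T e)‖^2 ≤ (1+δ) * ‖e‖^2 := by
    have h1 : ‖T e - projE K2 (T e)‖^2 ≤ ‖T e‖^2 := by
      have := projE_pyth K2 (T e)
      nlinarith [sq_nonneg ‖projE K2 (T e)‖]
    exact le_trans h1 (key e heX).2
  have hF_low : (1-δ) * ‖e‖^2 ≤ ‖T e - projE K2 (T e)‖^2 := by
    have hezX : e - z ∈ X := Submodule.sub_mem X heX (hX2 hzX2)
    have hinner : ⟪z, e⟫ = 0 := by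
      have := (Submodule.mem_orthogonal X2 e).1 heperp z hzX2
      exact this
    have hez : ‖e - z‖^2 = ‖e‖^2 + ‖z‖^2 := by
      have : ‖e - z‖^2 = ‖e‖^2 - 2 * ⟪e, z⟫ + ‖z‖^2 := norm_sub_sq_real e z
      rw [real_inner_comm] at this
      rw [this, hinner]; ring
    have h1 : (1-δ) * ‖e - z‖^2 ≤ ‖T (e - z)‖^2 := (key _ hezX).1
    have h2 : T (e - z) = T e - projE K2 (T e) := by rw [map_sub, hz]
    rw [h2] at h1
    nlinarith [sq_nonneg ‖z‖]
  -- Pythagoras splits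
  have hpyth_u : ‖u‖^2 = ‖w‖^2 + ‖e‖^2 := projE_pyth X2 u
  have hpyth_Tu : ‖T u‖^2 = ‖projE K2 (T u)‖^2 + ‖T e - projE K2 (T e)‖^2 := by
    have := projE_pyth K2 (T u)
    rw [hTu_sub] at this
    exact this
  -- finish with the arithmetic lemma
  have := arith (‖e‖^2) (‖u‖^2) (‖T e - projE K2 (T e)‖^2) (‖T u‖^2)
    (‖w‖^2) (‖projE K2 (T u)‖^2) δ hδ0 hδ4 (by positivity)
    hpyth_u hpyth_Tu hF_low hF_high hTu_low hTu_high hu2 hTupos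
  calc |(‖projE K2 (T u)‖ / ‖T u‖)^2 - (‖w‖ / ‖u‖)^2|
      = |‖projE K2 (T u)‖^2 / ‖T u‖^2 - ‖w‖^2 / ‖u‖^2| := by
        rw [div_pow, div_pow]
    _ ≤ 3 * (1 - ‖w‖^2 / ‖u‖^2) * δ := this
    _ = 3 * (1 - (‖w‖ / ‖u‖)^2) * δ := by rw [div_pow]
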